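/- arXiv:2601.11498 — 2 statements merged into one kernel-verified Lean document; each statement's English description precedes it below -/
import Mathlib

section
/- (Donald's identity.) Let p be a probability vector over a finite index set, let ρ_x (for x in that set) and σ be density matrices on ℂ^d, and let ρ̄ = Σ_x p_x ρ_x. Then Σ_x p_x D(ρ_x‖σ) = Σ_x p_x D(ρ_x‖ρ̄) + D(ρ̄‖σ), where both sides are extended reals (equal to +∞ precisely when some support condition with p_x > 0 fails). -/
open Matrix BigOperators Filter ComplexOrder

attribute [local instance] Classical.propDecidable

noncomputable section

variable {ι κ : Type*} [Fintype ι] [DecidableEq ι] [Fintype κ] [DecidableEq κ]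

/-- A density matrix: Hermitian, positive semidefinite, trace one. -/
def IsDensityMatrix (ρ : Matrix ι ι ℂ) : Prop :=
  ρ.IsHermitian ∧ ρ.PosSemidef ∧ ρ.trace = 1

/-- Matrix logarithm by functional calculus on the support:
`log` on positive eigenvalues, `0` on the kernel (convention `0 · log 0 = 0`). -/
def mlog (ρ : Matrix ι ι ℂ) : Matrix ι ι ℂ :=
  cfc (fun x : ℝ => if x ≤ 0 then 0 else Real.log x) ρ

/-- Base-2 matrix logarithm by functional calculus on the support. -/
def mlog2 (ρ : Matrix ι ι ℂ) : Matrix ι ι ℂ :=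
  cfc (fun x : ℝ => if x ≤ 0 then 0 else Real.logb 2 x) ρ

/-- `supp ρ ⊆ supp σ`, expressed as `ker σ ⊆ ker ρ`. -/
def SuppLE (ρ σ : Matrix ι ι ℂ) : Prop :=
  ∀ v : ι → ℂ, σ.mulVec v = 0 → ρ.mulVec v = 0

/-- Quantum relative entropy (natural logarithm), as an extended real. -/
def qRelEnt (ρ σ : Matrix ι ι ℂ) : EReal :=
  if SuppLE ρ σ then (((ρ * (mlog ρ - mlog σ)).trace.re : ℝ) : EReal) else ⊤

/-- Quantum relative entropy (base-2 logarithm), as an extended real. -/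
def qRelEnt2 (ρ σ : Matrix ι ι ℂ) : EReal :=
  if SuppLE ρ σ then (((ρ * (mlog2 ρ - mlog2 σ)).trace.re : ℝ) : EReal) else ⊤

/-- Von Neumann entropy (natural logarithm). -/
def vnEnt (ρ : Matrix ι ι ℂ) : ℝ := -((ρ * mlog ρ).trace.re)

/-- Von Neumann entropy (base-2 logarithm). -/
def vnEnt2 (ρ : Matrix ι ι ℂ) : ℝ := -((ρ * mlog2 ρ).trace.re)

/-- The ampliation `𝒩 ⊗ id_k` of a map on matrices, acting on block matrices. -/
def ampliate (k : ℕ) (𝒩 : Matrix ι ι ℂ →ₗ[ℂ] Matrix κ κ ℂ)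
    (V : Matrix (ι × Fin k) (ι × Fin k) ℂ) : Matrix (κ × Fin k) (κ × Fin k) ℂ :=
  Matrix.of fun p q => 𝒩 (Matrix.of fun a b => V (a, p.2) (b, q.2)) p.1 q.1

/-- A quantum channel: a linear, trace-preserving, completely positive map. -/
structure IsQChannel (𝒩 : Matrix ι ι ℂ →ₗ[ℂ] Matrix κ κ ℂ) : Prop where
  trace_preserving : ∀ ρ : Matrix ι ι ℂ, (𝒩 ρ).trace = ρ.trace
  completely_positive : ∀ (k : ℕ) (V : Matrix (ι × Fin k) (ι × Fin k) ℂ),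
    V.PosSemidef → (ampliate k 𝒩 V).PosSemidef

/-- The set of values `H(Σ p_x 𝒩(ρ_x)) − Σ p_x H(𝒩(ρ_x))` over finite ensembles
(natural logarithm). -/
def holevoSet (𝒩 : Matrix ι ι ℂ → Matrix κ κ ℂ) : Set ℝ :=
  { c | ∃ (m : ℕ) (p : Fin m → ℝ) (ρ : Fin m → Matrix ι ι ℂ),
      (∀ x, 0 ≤ p x) ∧ (∑ x, p x = 1) ∧ (∀ x, IsDensityMatrix (ρ x)) ∧
      c = vnEnt (∑ x, (p x : ℂ) • 𝒩 (ρ x)) - ∑ x, p x * vnEnt (𝒩 (ρ x)) }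

/-- The Holevo quantity (natural logarithm). -/
def holevo (𝒩 : Matrix ι ι ℂ → Matrix κ κ ℂ) : ℝ := sSup (holevoSet 𝒩)

/-- The set of values `H(Σ p_x 𝒩(ρ_x)) − Σ p_x H(𝒩(ρ_x))` over finite ensembles
(base-2 logarithm). -/
def holevoSet2 (𝒩 : Matrix ι ι ℂ → Matrix κ κ ℂ) : Set ℝ :=
  { c | ∃ (m : ℕ) (p : Fin m → ℝ) (ρ : Fin m → Matrix ι ι ℂ),
      (∀ x, 0 ≤ p x) ∧ (∑ x, p x = 1) ∧ (∀ x, IsDensityMatrix (ρ x)) ∧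
      c = vnEnt2 (∑ x, (p x : ℂ) • 𝒩 (ρ x)) - ∑ x, p x * vnEnt2 (𝒩 (ρ x)) }

/-- The Holevo quantity (base-2 logarithm). -/
def holevo2 (𝒩 : Matrix ι ι ℂ → Matrix κ κ ℂ) : ℝ := sSup (holevoSet2 𝒩)

/-- The `n`-fold tensor power `𝒩^{⊗n}` of a linear map on matrix algebras, acting as `𝒩`
independently on each tensor factor; matrices on the `n`-fold space are indexed by
`Fin n → Fin d`. -/
def tensorPow {dA dB : ℕ} (n : ℕ)
    (𝒩 : Matrix (Fin dA) (Fin dA) ℂ → Matrix (Fin dB) (Fin dB) ℂ)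
    (ρ : Matrix (Fin n → Fin dA) (Fin n → Fin dA) ℂ) :
    Matrix (Fin n → Fin dB) (Fin n → Fin dB) ℂ :=
  Matrix.of fun f' g' => ∑ f : Fin n → Fin dA, ∑ g : Fin n → Fin dA,
    ρ f g * ∏ i, 𝒩 (Matrix.single (f i) (g i) 1) (f' i) (g' i)

/-- The tensor product `ρ_1 ⊗ ⋯ ⊗ ρ_n` of `n` matrices, as a matrix indexed by
`Fin n → Fin d`. -/
def prodMatrix {d n : ℕ} (ρs : Fin n → Matrix (Fin d) (Fin d) ℂ) :
    Matrix (Fin n → Fin d) (Fin n → Fin d) ℂ :=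
  Matrix.of fun f g => ∏ i, ρs i (f i) (g i)

/-- Real matrix power by functional calculus (acting on eigenvalues). -/
def mpow (A : Matrix ι ι ℂ) (r : ℝ) : Matrix ι ι ℂ :=
  cfc (fun x : ℝ => x ^ r) A



lemma ereal_coe_sum' {α : Type*} (s : Finset α) (f : α → ℝ) :
    ((∑ x ∈ s, f x : ℝ) : EReal) = ∑ x ∈ s, ((f x : ℝ) : EReal) :=
  map_sum (⟨⟨Real.toEReal, EReal.coe_zero⟩, EReal.coe_add⟩ : ℝ →+ EReal) f s

lemma ereal_sum_ne_bot' {α : Type*} (s : Finset α) (f : α → EReal)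
    (hb : ∀ a ∈ s, f a ≠ ⊥) : ∑ a ∈ s, f a ≠ ⊥ := by
  classical
  induction s using Finset.induction with
  | empty => simp
  | insert _ _ h ih =>
    rw [Finset.sum_insert h, Ne, EReal.add_eq_bot_iff]
    push_neg
    exact ⟨hb _ (Finset.mem_insert_self _ _),
      ih fun a ha => hb a (Finset.mem_insert_of_mem ha)⟩

lemma ereal_sum_eq_top' {α : Type*} (s : Finset α) (f : α → EReal)
    (hb : ∀ a ∈ s, f a ≠ ⊥) (x : α) (hx : x ∈ s) (ht : f x = ⊤) :
    ∑ a ∈ s, f a = ⊤ := by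
  classical
  rw [← Finset.add_sum_erase s f hx, ht]
  exact EReal.top_add_of_ne_bot (ereal_sum_ne_bot' _ _
    fun a ha => hb a (Finset.mem_of_mem_erase ha))

lemma matrix_sum_mulVec' {α n : Type*} [Fintype n] (s : Finset α)
    (A : α → Matrix n n ℂ) (v : n → ℂ) :
    (∑ y ∈ s, A y) *ᵥ v = ∑ y ∈ s, A y *ᵥ v := by
  ext i
  simp [Matrix.mulVec, dotProduct, Matrix.sum_apply, Finset.sum_mul,
    Finset.sum_apply]
  exact Finset.sum_comm

lemma dotProduct_finset_sum' {α n : Type*} [Fintype n] (s : Finset α)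
    (v : n → ℂ) (w : α → n → ℂ) :
    v ⬝ᵥ (∑ y ∈ s, w y) = ∑ y ∈ s, v ⬝ᵥ w y := by
  simp only [dotProduct, Finset.sum_apply, Finset.mul_sum]
  exact Finset.sum_comm

lemma sum_smul_mulVec_zero' {d k : ℕ} (p : Fin k → ℝ) (hp : ∀ x, 0 ≤ p x)
    (ρ : Fin k → Matrix (Fin d) (Fin d) ℂ) (hρ : ∀ x, (ρ x).PosSemidef)
    (v : Fin d → ℂ) (h : (∑ y, ((p y : ℝ) : ℂ) • ρ y) *ᵥ v = 0)
    (x : Fin k) (hx : 0 < p x) : (ρ x) *ᵥ v = 0 := by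
  have h0 : ∑ y, ((p y : ℝ) : ℂ) * (star v ⬝ᵥ (ρ y) *ᵥ v) = 0 := by
    have := congrArg (fun w => star v ⬝ᵥ w) h
    simpa [matrix_sum_mulVec', Matrix.smul_mulVec, dotProduct_finset_sum',
      dotProduct_smul, smul_eq_mul] using this
  have hterm : ∀ y ∈ Finset.univ, (0 : ℂ) ≤ ((p y : ℝ) : ℂ) * (star v ⬝ᵥ (ρ y) *ᵥ v) :=
    fun y _ => mul_nonneg (by exact_mod_cast hp y) ((hρ y).dotProduct_mulVec_nonneg v)
  have hz := (Finset.sum_eq_zero_iff_of_nonneg hterm).mp h0 x (Finset.mem_univ x)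
  have hpx : ((p x : ℝ) : ℂ) ≠ 0 := by exact_mod_cast hx.ne'
  have hdz : star v ⬝ᵥ (ρ x) *ᵥ v = 0 := by
    rcases mul_eq_zero.mp hz with h' | h'
    · exact absurd h' hpx
    · exact h'
  exact ((hρ x).dotProduct_mulVec_zero_iff v).mp hdz

/-- Donald's identity: `Σ_x p_x D(ρ_x‖σ) = Σ_x p_x D(ρ_x‖ρ̄) + D(ρ̄‖σ)` in the
extended reals, where `ρ̄ = Σ_x p_x ρ_x`; either side is `+∞` precisely when some support
condition with `p_x > 0` fails. -/
theorem donald_identity {d k : ℕ} (p : Fin k → ℝ) (hp : ∀ x, 0 ≤ p x) (hp1 : ∑ x, p x = 1)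
    (ρ : Fin k → Matrix (Fin d) (Fin d) ℂ) (hρ : ∀ x, IsDensityMatrix (ρ x))
    (σ : Matrix (Fin d) (Fin d) ℂ) (hσ : IsDensityMatrix σ) :
    (∑ x, ((p x : ℝ) : EReal) * qRelEnt (ρ x) σ =
      ∑ x, ((p x : ℝ) : EReal) * qRelEnt (ρ x) (∑ y, ((p y : ℝ) : ℂ) • ρ y)
        + qRelEnt (∑ y, ((p y : ℝ) : ℂ) • ρ y) σ)
    ∧ ((∑ x, ((p x : ℝ) : EReal) * qRelEnt (ρ x) σ = ⊤) ↔
        ∃ x, 0 < p x ∧ ¬ SuppLE (ρ x) σ) := by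
  classical
  have hPSD : ∀ x, (ρ x).PosSemidef := fun x => (hρ x).2.1
  have hsub : ∀ x, 0 < p x → SuppLE (ρ x) (∑ y, ((p y : ℝ) : ℂ) • ρ y) := fun x hx v hv =>
    sum_smul_mulVec_zero' p hp ρ hPSD v hv x hx
  have htr : ∀ M : Matrix (Fin d) (Fin d) ℂ,
      ((∑ y, ((p y : ℝ) : ℂ) • ρ y) * M).trace.re = ∑ x, p x * ((ρ x) * M).trace.re := by
    intro M
    rw [Matrix.sum_mul, Matrix.trace_sum, Complex.re_sum]
    refine Finset.sum_congr rfl fun x _ => ?_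
    rw [smul_mul_assoc, Matrix.trace_smul, smul_eq_mul, Complex.re_ofReal_mul]
  have hRsum : ∑ x, ((p x : ℝ) : EReal) * qRelEnt (ρ x) (∑ y, ((p y : ℝ) : ℂ) • ρ y)
      = ((∑ x, p x * ((ρ x * (mlog (ρ x) - mlog (∑ y, ((p y : ℝ) : ℂ) • ρ y))).trace.re) : ℝ)
          : EReal) := by
    rw [ereal_coe_sum']
    refine Finset.sum_congr rfl fun x _ => ?_
    rcases (hp x).lt_or_eq with hx | hx
    · unfold qRelEnt
      rw [if_pos (hsub x hx), ← EReal.coe_mul]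
    · rw [← hx]; simp
  by_cases H : ∀ x, 0 < p x → SuppLE (ρ x) σ
  · have hbarσ : SuppLE (∑ y, ((p y : ℝ) : ℂ) • ρ y) σ := by
      intro v hv
      rw [matrix_sum_mulVec']
      refine Finset.sum_eq_zero fun y _ => ?_
      rcases (hp y).lt_or_eq with hy | hy
      · rw [Matrix.smul_mulVec, H y hy v hv, smul_zero]
      · rw [← hy]; simp
    have hLsum : ∑ x, ((p x : ℝ) : EReal) * qRelEnt (ρ x) σ
        = ((∑ x, p x * ((ρ x * (mlog (ρ x) - mlog σ)).trace.re) : ℝ) : EReal) := by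
      rw [ereal_coe_sum']
      refine Finset.sum_congr rfl fun x _ => ?_
      rcases (hp x).lt_or_eq with hx | hx
      · unfold qRelEnt
        rw [if_pos (H x hx), ← EReal.coe_mul]
      · rw [← hx]; simp
    have hQ : qRelEnt (∑ y, ((p y : ℝ) : ℂ) • ρ y) σ
        = ((((∑ y, ((p y : ℝ) : ℂ) • ρ y) *
              (mlog (∑ y, ((p y : ℝ) : ℂ) • ρ y) - mlog σ)).trace.re : ℝ) : EReal) := by
      unfold qRelEnt
      rw [if_pos hbarσ]
    have hreal : ∑ x, p x * ((ρ x * (mlog (ρ x) - mlog σ)).trace.re)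
        = (∑ x, p x * ((ρ x * (mlog (ρ x) - mlog (∑ y, ((p y : ℝ) : ℂ) • ρ y))).trace.re))
          + (((∑ y, ((p y : ℝ) : ℂ) • ρ y) *
              (mlog (∑ y, ((p y : ℝ) : ℂ) • ρ y) - mlog σ)).trace.re) := by
      have e1 : ∑ x, p x * ((ρ x * (mlog (ρ x) - mlog σ)).trace.re)
          = ∑ x, p x * (ρ x * mlog (ρ x)).trace.re
            - ∑ x, p x * (ρ x * mlog σ).trace.re := by
        rw [← Finset.sum_sub_distrib]
        refine Finset.sum_congr rfl fun x _ => ?_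
        rw [mul_sub (ρ x), Matrix.trace_sub, Complex.sub_re, mul_sub]
      have e2 : ∑ x, p x * ((ρ x * (mlog (ρ x) - mlog (∑ y, ((p y : ℝ) : ℂ) • ρ y))).trace.re)
          = ∑ x, p x * (ρ x * mlog (ρ x)).trace.re
            - ∑ x, p x * (ρ x * mlog (∑ y, ((p y : ℝ) : ℂ) • ρ y)).trace.re := by
        rw [← Finset.sum_sub_distrib]
        refine Finset.sum_congr rfl fun x _ => ?_
        rw [mul_sub (ρ x), Matrix.trace_sub, Complex.sub_re, mul_sub]
      have e3 : (((∑ y, ((p y : ℝ) : ℂ) • ρ y) *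
              (mlog (∑ y, ((p y : ℝ) : ℂ) • ρ y) - mlog σ)).trace.re)
          = ∑ x, p x * (ρ x * mlog (∑ y, ((p y : ℝ) : ℂ) • ρ y)).trace.re
            - ∑ x, p x * (ρ x * mlog σ).trace.re := by
        rw [mul_sub, Matrix.trace_sub, Complex.sub_re, htr, htr]
      rw [e1, e2, e3]; ring
    constructor
    · rw [hLsum, hRsum, hQ, hreal, EReal.coe_add]
    · rw [hLsum]
      constructor
      · intro h
        exact absurd h (EReal.coe_ne_top _)
      · rintro ⟨x, hx, hs⟩
        exact absurd (H x hx) hs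
  · push_neg at H
    obtain ⟨x0, hx0, hs0⟩ := H
    have hbot : ∀ x ∈ Finset.univ, ((p x : ℝ) : EReal) * qRelEnt (ρ x) σ ≠ ⊥ := by
      intro x _
      by_cases hS : SuppLE (ρ x) σ
      · unfold qRelEnt
        rw [if_pos hS, ← EReal.coe_mul]
        exact EReal.coe_ne_bot _
      · unfold qRelEnt
        rw [if_neg hS]
        rcases (hp x).lt_or_eq with hx | hx
        · rw [EReal.coe_mul_top_of_pos hx]
          simp
        · rw [← hx, EReal.coe_zero, zero_mul]
          simp
    have hLtop : ∑ x, ((p x : ℝ) : EReal) * qRelEnt (ρ x) σ = ⊤ := by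
      refine ereal_sum_eq_top' _ _ hbot x0 (Finset.mem_univ x0) ?_
      unfold qRelEnt
      rw [if_neg hs0, EReal.coe_mul_top_of_pos hx0]
    have hbarnot : ¬ SuppLE (∑ y, ((p y : ℝ) : ℂ) • ρ y) σ := by
      intro hbar
      exact hs0 fun v hv => sum_smul_mulVec_zero' p hp ρ hPSD v (hbar v hv) x0 hx0
    constructor
    · rw [hLtop, hRsum]
      unfold qRelEnt
      rw [if_neg hbarnot, EReal.coe_add_top]
    · rw [hLtop]
      exact ⟨fun _ => ⟨x0, hx0, hs0⟩, fun _ => rfl⟩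

end
end

section
/- Let 𝒩 be a quantum channel from d_A×d_A to d_B×d_B complex matrices, and let {(p̄_x, ρ̄_x)} be a finite ensemble achieving the Holevo quantity χ(𝒩), assumed finite, and set ω = Σ_x p̄_x 𝒩(ρ̄_x). Then for every index x with p̄_x > 0 one has D(𝒩(ρ̄_x)‖ω) = χ(𝒩). -/
open Matrix BigOperators Filter ComplexOrder

attribute [local instance] Classical.propDecidable

noncomputable section

variable {ι κ : Type*} [Fintype ι] [DecidableEq ι] [Fintype κ] [DecidableEq κ]

section HelperDev
variable {n : Type*} [Fintype n] [DecidableEq n]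

lemma trace_mul_cfc (M B : Matrix n n ℂ) (hB : B.IsHermitian) (f : ℝ → ℝ) :
    (M * hB.cfc f).trace
      = ∑ j, (f (hB.eigenvalues j) : ℂ) *
          (star (hB.eigenvectorBasis j : n → ℂ) ⬝ᵥ (M *ᵥ (hB.eigenvectorBasis j : n → ℂ))) := by
  rw [Matrix.IsHermitian.cfc, Unitary.conjStarAlgAut_apply, ← mul_assoc, ← mul_assoc, Matrix.trace_mul_comm, ← mul_assoc, ← mul_assoc]
  rw [Matrix.trace]
  simp only [Matrix.diag, Matrix.mul_diagonal, Function.comp_apply]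
  refine Finset.sum_congr rfl fun j _ => ?_
  rw [mul_comm]
  congr 1
  simp only [Matrix.mul_apply, Matrix.star_apply,
    Matrix.IsHermitian.eigenvectorUnitary_apply, Matrix.conjTranspose_apply, Matrix.mulVec, dotProduct,
    Pi.star_apply, star_eq_conjTranspose]
  simp only [Finset.sum_mul, Finset.mul_sum]
  rw [Finset.sum_comm]
  exact Finset.sum_congr rfl fun a _ => Finset.sum_congr rfl fun b _ => by ring

lemma dot_unitary (V : Matrix n n ℂ) (hV : V ∈ Matrix.unitaryGroup n ℂ) (x y : n → ℂ) :
    star (V *ᵥ x) ⬝ᵥ (V *ᵥ y) = star x ⬝ᵥ y := by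
  rw [star_mulVec, ← Matrix.dotProduct_mulVec, Matrix.mulVec_mulVec, ← star_eq_conjTranspose,
    Matrix.mem_unitaryGroup_iff'.mp hV, Matrix.one_mulVec]

lemma unitary_mulVec_star (V : Matrix n n ℂ) (hV : V ∈ Matrix.unitaryGroup n ℂ) (v : n → ℂ) :
    V *ᵥ (star V *ᵥ v) = v := by
  rw [Matrix.mulVec_mulVec, Matrix.mem_unitaryGroup_iff.mp hV, Matrix.one_mulVec]

lemma dot_conj (V : Matrix n n ℂ) (hV : V ∈ Matrix.unitaryGroup n ℂ) (X : Matrix n n ℂ)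
    (v : n → ℂ) :
    star v ⬝ᵥ ((V * X * star V) *ᵥ v)
      = star (star V *ᵥ v) ⬝ᵥ (X *ᵥ (star V *ᵥ v)) := by
  have hw : V *ᵥ (star V *ᵥ v) = v := unitary_mulVec_star V hV v
  have h2 : (V * X * star V) *ᵥ v = V *ᵥ (X *ᵥ (star V *ᵥ v)) := by
    rw [Matrix.mulVec_mulVec, Matrix.mulVec_mulVec, mul_assoc]
  rw [h2]
  nth_rewrite 1 [← hw]
  exact dot_unitary V hV _ _

lemma dot_self_eigenbasis {B : Matrix n n ℂ} (hB : B.IsHermitian) (j : n) :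
    star (hB.eigenvectorBasis j : n → ℂ) ⬝ᵥ (hB.eigenvectorBasis j : n → ℂ) = 1 := by
  have h := orthonormal_iff_ite.mp hB.eigenvectorBasis.orthonormal j j
  simp only [if_true, eq_self_iff_true] at h
  exact (dotProduct_comm _ _).trans ((EuclideanSpace.inner_eq_star_dotProduct _ _).symm.trans h)

lemma dot_eigenbasis_self {B : Matrix n n ℂ} (hB : B.IsHermitian) (j : n) :
    star (hB.eigenvectorBasis j : n → ℂ) ⬝ᵥ (B *ᵥ (hB.eigenvectorBasis j : n → ℂ))
      = (hB.eigenvalues j : ℂ) := by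
  rw [show B *ᵥ (hB.eigenvectorBasis j : n → ℂ)
      = hB.eigenvalues j • (hB.eigenvectorBasis j : n → ℂ) from hB.mulVec_eigenvectorBasis j]
  rw [dotProduct_smul]
  rw [dot_self_eigenbasis hB j]
  simp

section More
variable {B : Matrix n n ℂ} (hB : B.IsHermitian)

lemma cfc_one' : hB.cfc (fun _ => 1) = 1 := by
  rw [Matrix.IsHermitian.cfc]
  have h1 : (RCLike.ofReal ∘ (fun _ : ℝ => (1:ℝ)) ∘ hB.eigenvalues : n → ℂ) = fun _ => 1 := by
    funext j; simp
  rw [h1, Matrix.diagonal_one, map_one]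

lemma sum_dot_eigenbasis (M : Matrix n n ℂ) :
    ∑ j, star (hB.eigenvectorBasis j : n → ℂ) ⬝ᵥ (M *ᵥ (hB.eigenvectorBasis j : n → ℂ))
      = M.trace := by
  have h := trace_mul_cfc M B hB (fun _ => 1)
  rw [cfc_one' hB, mul_one] at h
  rw [h]
  simp

lemma sum_eigenvalues_eq_trace' : ∑ j, (hB.eigenvalues j : ℂ) = B.trace := by
  rw [← sum_dot_eigenbasis hB B]
  exact Finset.sum_congr rfl fun j _ => (dot_eigenbasis_self hB j).symm

lemma cfc_congr_eigen {f g : ℝ → ℝ} (h : ∀ j, f (hB.eigenvalues j) = g (hB.eigenvalues j)) :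
    hB.cfc f = hB.cfc g := by
  rw [Matrix.IsHermitian.cfc, Matrix.IsHermitian.cfc,
    show (RCLike.ofReal ∘ f ∘ hB.eigenvalues : n → ℂ) = (RCLike.ofReal ∘ g ∘ hB.eigenvalues) from
      funext fun j => by simp [Function.comp, h j]]

lemma cfc_sub' (f g : ℝ → ℝ) : hB.cfc (fun x => f x - g x) = hB.cfc f - hB.cfc g := by
  rw [Matrix.IsHermitian.cfc, Matrix.IsHermitian.cfc, Matrix.IsHermitian.cfc]
  have hd : (diagonal (RCLike.ofReal ∘ (fun x => f x - g x) ∘ hB.eigenvalues) : Matrix n n ℂ)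
      = diagonal (RCLike.ofReal ∘ f ∘ hB.eigenvalues)
        - diagonal (RCLike.ofReal ∘ g ∘ hB.eigenvalues) := by
    rw [show (RCLike.ofReal ∘ (fun x => f x - g x) ∘ hB.eigenvalues : n → ℂ)
        = fun i => (f (hB.eigenvalues i) : ℂ) - (g (hB.eigenvalues i) : ℂ) from
        funext fun i => by simp, ← Matrix.diagonal_sub]
    congr 1
  rw [hd, map_sub]

end More

noncomputable def flog : ℝ → ℝ := fun x => if x ≤ 0 then 0 else Real.log x

lemma flog_of_pos {x : ℝ} (hx : 0 < x) : flog x = Real.log x := if_neg (not_le.mpr hx)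

lemma flog_zero : flog 0 = 0 := if_pos le_rfl

lemma klein_term {a b c : ℝ} (ha : 0 ≤ a) (hb : 0 ≤ b) (hc : 0 ≤ c) (h0 : b = 0 → a * c = 0) :
    c * (a - b) ≤ c * (a * flog a) - c * (a * flog b) := by
  rcases hb.eq_or_lt with hb0 | hb0
  · have hac : a * c = 0 := h0 hb0.symm
    have hca : c * a = 0 := by rw [mul_comm]; exact hac
    rw [← hb0, flog_zero]
    have h1 : c * (a - 0) = 0 := by rw [sub_zero, hca]
    have h2 : c * (a * flog a) = 0 := by rw [show c * (a * flog a) = c * a * flog a by ring, hca, zero_mul]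
    have h3 : c * (a * 0) = 0 := by ring
    rw [h1, h2, h3]; norm_num
  · rw [flog_of_pos hb0]
    rcases ha.eq_or_lt with ha0 | ha0
    · rw [← ha0, flog_zero]
      have : 0 ≤ c * b := mul_nonneg hc hb0.le
      nlinarith
    · rw [flog_of_pos ha0]
      have h := Real.log_le_sub_one_of_pos (div_pos hb0 ha0)
      rw [Real.log_div hb0.ne' ha0.ne'] at h
      have h2 : a * (Real.log b - Real.log a) ≤ a * (b / a - 1) :=
        mul_le_mul_of_nonneg_left h ha0.le
      have h3 : a * (b / a - 1) = b - a := by field_simp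
      have h4 : a - b ≤ a * Real.log a - a * Real.log b := by nlinarith
      calc c * (a - b) ≤ c * (a * Real.log a - a * Real.log b) := mul_le_mul_of_nonneg_left h4 hc
        _ = c * (a * Real.log a) - c * (a * Real.log b) := by ring

lemma re_sum_mul (x : n → ℝ) (z : n → ℂ) :
    (∑ j, (x j : ℂ) * z j).re = ∑ j, x j * (z j).re := by
  rw [Complex.re_sum]
  exact Finset.sum_congr rfl fun j _ => by simp [Complex.mul_re]

section Klein
variable {ρ σ : Matrix n n ℂ} (hρ : ρ.PosSemidef) (hσ : σ.PosSemidef)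

lemma expand_dot (j : n) :
    star (hσ.1.eigenvectorBasis j : n → ℂ) ⬝ᵥ (ρ *ᵥ (hσ.1.eigenvectorBasis j : n → ℂ))
      = ∑ i, (hρ.1.eigenvalues i : ℂ) *
          (Complex.normSq ((star (hρ.1.eigenvectorUnitary : Matrix n n ℂ) *ᵥ
            (hσ.1.eigenvectorBasis j : n → ℂ)) i) : ℝ) := by
  conv_lhs => rw [hρ.1.spectral_theorem, Unitary.conjStarAlgAut_apply]
  rw [dot_conj _ (hρ.1.eigenvectorUnitary).2]
  rw [dotProduct]
  refine Finset.sum_congr rfl fun i _ => ?_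
  rw [Matrix.mulVec_diagonal]
  simp only [Pi.star_apply, Function.comp_apply, RCLike.ofReal_alg]
  rw [show ∀ z w : ℂ, star z * (w * z) = w * (z * star z) from fun z w => by ring]
  simp [Complex.star_def, Complex.mul_conj, smul_eq_mul, Complex.real_smul]

lemma sum_c_col (j : n) :
    ∑ i, Complex.normSq ((star (hρ.1.eigenvectorUnitary : Matrix n n ℂ) *ᵥ
        (hσ.1.eigenvectorBasis j : n → ℂ)) i) = 1 := by
  have h1 : star ((star (hρ.1.eigenvectorUnitary : Matrix n n ℂ)) *ᵥ (hσ.1.eigenvectorBasis j : n → ℂ))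
      ⬝ᵥ ((star (hρ.1.eigenvectorUnitary : Matrix n n ℂ)) *ᵥ (hσ.1.eigenvectorBasis j : n → ℂ))
      = 1 := by
    rw [dot_unitary _ (Unitary.star_mem (hρ.1.eigenvectorUnitary).2), dot_self_eigenbasis]
  have h2 : star ((star (hρ.1.eigenvectorUnitary : Matrix n n ℂ)) *ᵥ (hσ.1.eigenvectorBasis j : n → ℂ))
      ⬝ᵥ ((star (hρ.1.eigenvectorUnitary : Matrix n n ℂ)) *ᵥ (hσ.1.eigenvectorBasis j : n → ℂ))
      = ((∑ i, Complex.normSq ((star (hρ.1.eigenvectorUnitary : Matrix n n ℂ) *ᵥ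
        (hσ.1.eigenvectorBasis j : n → ℂ)) i) : ℝ) : ℂ) := by
    rw [dotProduct, Complex.ofReal_sum]
    refine Finset.sum_congr rfl fun i _ => ?_
    simp only [Pi.star_apply]
    rw [mul_comm]
    simp [Complex.star_def, Complex.mul_conj]
  rw [h2] at h1
  exact_mod_cast h1

lemma sum_c_row (i : n) :
    ∑ j, Complex.normSq ((star (hρ.1.eigenvectorUnitary : Matrix n n ℂ) *ᵥ
        (hσ.1.eigenvectorBasis j : n → ℂ)) i) = 1 := by
  set U : Matrix n n ℂ := (hρ.1.eigenvectorUnitary : Matrix n n ℂ)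
  set V : Matrix n n ℂ := (hσ.1.eigenvectorUnitary : Matrix n n ℂ)
  have hWc : ∀ j, (star U *ᵥ (hσ.1.eigenvectorBasis j : n → ℂ)) i = (star U * V) i j := by
    intro j
    simp [Matrix.mulVec, Matrix.mul_apply, dotProduct, V,
      Matrix.IsHermitian.eigenvectorUnitary_apply]
  have hW : (star U * V) * star (star U * V) = 1 := by
    rw [Matrix.star_mul, star_star, show star U * V * (star V * U) = star U * (V * star V) * U by
      noncomm_ring, Matrix.mem_unitaryGroup_iff.mp (hσ.1.eigenvectorUnitary).2, mul_one,
      Matrix.mem_unitaryGroup_iff'.mp (hρ.1.eigenvectorUnitary).2]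
  have h1 : ((star U * V) * star (star U * V)) i i = 1 := by rw [hW]; simp
  rw [Matrix.mul_apply] at h1
  have h2 : ∑ j, (star U * V) i j * star (star U * V) j i
      = ((∑ j, Complex.normSq ((star U *ᵥ (hσ.1.eigenvectorBasis j : n → ℂ)) i) : ℝ) : ℂ) := by
    rw [Complex.ofReal_sum]
    refine Finset.sum_congr rfl fun j _ => ?_
    rw [hWc j, Matrix.star_apply]
    simp [Complex.star_def, Complex.mul_conj]
  rw [h2] at h1
  exact_mod_cast h1

end Klein

section Klein2
variable {ρ σ : Matrix n n ℂ} (hρ : ρ.PosSemidef) (hσ : σ.PosSemidef)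

lemma Ere_self (f : ℝ → ℝ) {B : Matrix n n ℂ} (hB : B.IsHermitian) :
    ((B * hB.cfc f).trace).re = ∑ j, f (hB.eigenvalues j) * hB.eigenvalues j := by
  rw [trace_mul_cfc B B hB f]
  simp only [dot_eigenbasis_self hB]
  rw [re_sum_mul]
  simp

lemma Ere_other (f : ℝ → ℝ) :
    ((ρ * hσ.1.cfc f).trace).re = ∑ j, f (hσ.1.eigenvalues j) *
      (∑ i, hρ.1.eigenvalues i * Complex.normSq ((star (hρ.1.eigenvectorUnitary : Matrix n n ℂ) *ᵥ
        (hσ.1.eigenvectorBasis j : n → ℂ)) i)) := by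
  rw [trace_mul_cfc ρ σ hσ.1 f, re_sum_mul]
  refine Finset.sum_congr rfl fun j _ => ?_
  congr 1
  rw [expand_dot hρ hσ j, re_sum_mul]
  simp

lemma klein_ineq (htr : ρ.trace.re = σ.trace.re)
    (hsupp : ∀ v, σ *ᵥ v = 0 → ρ *ᵥ v = 0) :
    ((ρ * hσ.1.cfc flog).trace).re ≤ ((ρ * hρ.1.cfc flog).trace).re := by
  rw [Ere_other hρ hσ flog, Ere_self flog hρ.1]
  set a := hρ.1.eigenvalues with ha_def
  set b := hσ.1.eigenvalues with hb_def
  set c : n → n → ℝ := fun i j => Complex.normSq ((star (hρ.1.eigenvectorUnitary : Matrix n n ℂ) *ᵥ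
      (hσ.1.eigenvectorBasis j : n → ℂ)) i) with hc_def
  have ha : ∀ i, 0 ≤ a i := hρ.eigenvalues_nonneg
  have hb : ∀ j, 0 ≤ b j := hσ.eigenvalues_nonneg
  have hc : ∀ i j, 0 ≤ c i j := fun i j => Complex.normSq_nonneg _
  have h0 : ∀ j, b j = 0 → ∀ i, a i * c i j = 0 := by
    intro j hbj i
    have hσv : σ *ᵥ (hσ.1.eigenvectorBasis j : n → ℂ) = 0 := by
      rw [show σ *ᵥ (hσ.1.eigenvectorBasis j : n → ℂ)
          = hσ.1.eigenvalues j • (hσ.1.eigenvectorBasis j : n → ℂ) from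
          hσ.1.mulVec_eigenvectorBasis j, show hσ.1.eigenvalues j = b j from rfl, hbj, zero_smul]
    have hρv := hsupp _ hσv
    have hdot : star (hσ.1.eigenvectorBasis j : n → ℂ) ⬝ᵥ (ρ *ᵥ (hσ.1.eigenvectorBasis j : n → ℂ)) = 0 := by
      rw [hρv, dotProduct_zero]
    rw [expand_dot hρ hσ j] at hdot
    have hre : ∑ i, a i * c i j = 0 := by
      have := congrArg Complex.re hdot
      rwa [re_sum_mul, Complex.zero_re] at this
      
    have := (Finset.sum_eq_zero_iff_of_nonneg (fun i _ => mul_nonneg (ha i) (hc i j))).mp hre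
    exact this i (Finset.mem_univ i)
  have hrow : ∀ i, ∑ j, c i j = 1 := fun i => sum_c_row hρ hσ i
  have hcol : ∀ j, ∑ i, c i j = 1 := fun j => sum_c_col hρ hσ j
  have tra : ∑ i, a i = ρ.trace.re := by
    have := congrArg Complex.re (sum_eigenvalues_eq_trace' hρ.1)
    rwa [Complex.re_sum] at this
    
  have trb : ∑ j, b j = σ.trace.re := by
    have := congrArg Complex.re (sum_eigenvalues_eq_trace' hσ.1)
    rwa [Complex.re_sum] at this
  have hterm : ∀ i j, c i j * (a i - b j)
      ≤ c i j * (a i * flog (a i)) - c i j * (a i * flog (b j)) := fun i j =>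
    klein_term (ha i) (hb j) (hc i j) (fun h => h0 j h i)
  have hsum : ∑ i, ∑ j, c i j * (a i - b j)
      ≤ ∑ i, ∑ j, (c i j * (a i * flog (a i)) - c i j * (a i * flog (b j))) :=
    Finset.sum_le_sum fun i _ => Finset.sum_le_sum fun j _ => hterm i j
  have hA : ∑ i, ∑ j, c i j * (a i * flog (a i)) = ∑ i, a i * flog (a i) := by
    refine Finset.sum_congr rfl fun i _ => ?_
    rw [← Finset.sum_mul, hrow i, one_mul]
  have hB2 : ∑ i, ∑ j, c i j * (a i * flog (b j)) = ∑ j, flog (b j) * ∑ i, a i * c i j := by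
    rw [Finset.sum_comm]
    refine Finset.sum_congr rfl fun j _ => ?_
    rw [Finset.mul_sum]
    exact Finset.sum_congr rfl fun i _ => by ring
  have hS1 : ∑ i, ∑ j, c i j * (a i - b j) = 0 := by
    have e1 : ∀ i, ∑ j, c i j * (a i - b j) = a i - ∑ j, c i j * b j := by
      intro i
      simp only [mul_sub]
      rw [Finset.sum_sub_distrib, ← Finset.sum_mul, hrow i, one_mul]
    simp only [e1]
    rw [Finset.sum_sub_distrib, Finset.sum_comm]
    have e2 : ∀ j, ∑ i, c i j * b j = b j := by
      intro j
      rw [← Finset.sum_mul, hcol j, one_mul]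
    simp only [e2]
    rw [tra, trb, htr, sub_self]
  have hsplit : ∑ i, ∑ j, (c i j * (a i * flog (a i)) - c i j * (a i * flog (b j)))
      = ∑ i, a i * flog (a i) - ∑ j, flog (b j) * ∑ i, a i * c i j := by
    simp only [Finset.sum_sub_distrib]
    rw [hA, hB2]
  rw [hsplit, hS1] at hsum
  have hfinal : ∑ j, flog (b j) * ∑ i, a i * c i j ≤ ∑ i, a i * flog (a i) := by linarith
  calc ∑ j, flog (b j) * ∑ i, a i * c i j ≤ ∑ i, a i * flog (a i) := hfinal
    _ = ∑ j, flog (a j) * a j := Finset.sum_congr rfl fun i _ => by ring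

end Klein2

lemma Ere_bound {τ : Matrix n n ℂ} (hτ : τ.PosSemidef) (hτtr : τ.trace = 1)
    {A : Matrix n n ℂ} (hA : A.IsHermitian) {h : ℝ → ℝ} {η : ℝ}
    (hbd : ∀ j, |h (hA.eigenvalues j)| ≤ η) :
    |((τ * hA.cfc h).trace).re| ≤ η := by
  rw [trace_mul_cfc τ A hA h, re_sum_mul]
  have hq : ∀ j, 0 ≤ (star (hA.eigenvectorBasis j : n → ℂ) ⬝ᵥ (τ *ᵥ (hA.eigenvectorBasis j : n → ℂ))).re := by
    intro j
    simpa using hτ.re_dotProduct_nonneg (hA.eigenvectorBasis j : n → ℂ)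
  have hqsum : ∑ j, (star (hA.eigenvectorBasis j : n → ℂ) ⬝ᵥ (τ *ᵥ (hA.eigenvectorBasis j : n → ℂ))).re = 1 := by
    have := congrArg Complex.re (sum_dot_eigenbasis hA τ)
    rw [Complex.re_sum] at this
    rw [this, hτtr]
    simp
  calc |∑ j, h (hA.eigenvalues j) * (star (hA.eigenvectorBasis j : n → ℂ) ⬝ᵥ (τ *ᵥ (hA.eigenvectorBasis j : n → ℂ))).re|
      ≤ ∑ j, |h (hA.eigenvalues j) * (star (hA.eigenvectorBasis j : n → ℂ) ⬝ᵥ (τ *ᵥ (hA.eigenvectorBasis j : n → ℂ))).re| :=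
        Finset.abs_sum_le_sum_abs _ _
    _ ≤ ∑ j, η * (star (hA.eigenvectorBasis j : n → ℂ) ⬝ᵥ (τ *ᵥ (hA.eigenvectorBasis j : n → ℂ))).re := by
        refine Finset.sum_le_sum fun j _ => ?_
        rw [abs_mul, abs_of_nonneg (hq j)]
        exact mul_le_mul_of_nonneg_right (hbd j) (hq j)
    _ = η := by rw [← Finset.mul_sum, hqsum, mul_one]

lemma state_eigen_le_one {τ : Matrix n n ℂ} (hτ : τ.PosSemidef) (hτtr : τ.trace = 1) (j : n) :
    hτ.1.eigenvalues j ≤ 1 := by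
  have hsum : ∑ i, hτ.1.eigenvalues i = 1 := by
    have := congrArg Complex.re (sum_eigenvalues_eq_trace' hτ.1)
    rw [Complex.re_sum, hτtr] at this
    simpa using this
  rw [← hsum]
  exact Finset.single_le_sum (fun i _ => hτ.eigenvalues_nonneg i) (Finset.mem_univ j)

lemma eigen_dichotomy {τ ω : Matrix n n ℂ} (hτ : τ.PosSemidef) (hω : ω.PosSemidef)
    (hsupp : ∀ v, ω *ᵥ v = 0 → τ *ᵥ v = 0) {ε : ℝ} (hε0 : 0 ≤ ε) (hε1 : ε < 1)
    {δ : ℝ} (hδ : 0 < δ) (hδle : ∀ j, hω.1.eigenvalues j = 0 ∨ δ ≤ hω.1.eigenvalues j)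
    (hA : (((1-ε : ℝ) : ℂ) • ω + ((ε : ℝ) : ℂ) • τ).PosSemidef) (j : n) :
    hA.1.eigenvalues j = 0 ∨ (1-ε)*δ ≤ hA.1.eigenvalues j := by
  set A : Matrix n n ℂ := ((1-ε : ℝ) : ℂ) • ω + ((ε : ℝ) : ℂ) • τ with hAdef
  rcases eq_or_lt_of_le (hA.eigenvalues_nonneg j) with hl0 | hlpos
  · exact Or.inl hl0.symm
  right
  set lam := hA.1.eigenvalues j with hlam
  set v : n → ℂ := (hA.1.eigenvectorBasis j : n → ℂ) with hv_def
  have hv : A *ᵥ v = lam • v := hA.1.mulVec_eigenvectorBasis j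
  set V : Matrix n n ℂ := (hω.1.eigenvectorUnitary : Matrix n n ℂ) with hV_def
  have hVmem : V ∈ Matrix.unitaryGroup n ℂ := (hω.1.eigenvectorUnitary).2
  set b := hω.1.eigenvalues with hb_def
  set c : n → ℂ := star V *ᵥ v with hc_def
  have hc : V *ᵥ c = v := unitary_mulVec_star V hVmem v
  set c₀ : n → ℂ := fun k => if b k = 0 then c k else 0 with hc₀_def
  set v₀ : n → ℂ := V *ᵥ c₀ with hv₀_def
  have hVc₀ : star V *ᵥ (V *ᵥ c₀) = c₀ := by
    rw [Matrix.mulVec_mulVec, Matrix.mem_unitaryGroup_iff'.mp hVmem, Matrix.one_mulVec]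
  have hωv₀ : ω *ᵥ v₀ = 0 := by
    rw [hv₀_def]
    conv_lhs => rw [hω.1.spectral_theorem, Unitary.conjStarAlgAut_apply]
    rw [← Matrix.mulVec_mulVec, ← Matrix.mulVec_mulVec, hVc₀]
    have : Matrix.diagonal (RCLike.ofReal ∘ hω.1.eigenvalues) *ᵥ c₀ = 0 := by
      funext k
      rw [Matrix.mulVec_diagonal]
      by_cases hk : b k = 0
      · simp only [Function.comp_apply, Pi.zero_apply]
        exact mul_eq_zero.mpr (Or.inl (by rw [show hω.1.eigenvalues k = b k from rfl, hk]; simp))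
      · simp [hc₀_def, hk]
    rw [this, Matrix.mulVec_zero]
  have hτv₀ : τ *ᵥ v₀ = 0 := hsupp _ hωv₀
  have hAv₀ : A *ᵥ v₀ = 0 := by
    rw [hAdef, Matrix.add_mulVec, Matrix.smul_mulVec, Matrix.smul_mulVec,
      hωv₀, hτv₀, smul_zero, smul_zero, add_zero]
  have horth : star v₀ ⬝ᵥ v = 0 := by
    have h1 : star v₀ ⬝ᵥ (A *ᵥ v) = lam • (star v₀ ⬝ᵥ v) := by
      rw [hv, dotProduct_smul]
    have hstar : star v₀ ᵥ* A = star (A *ᵥ v₀) := by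
      conv_rhs => rw [star_mulVec]
      rw [hA.1.eq]
    have h2 : star v₀ ⬝ᵥ (A *ᵥ v) = 0 := by
      rw [Matrix.dotProduct_mulVec, hstar, hAv₀, star_zero, zero_dotProduct]
    rw [h2] at h1
    have := h1.symm
    rw [smul_eq_zero] at this
    rcases this with h | h
    · exact absurd h.symm hlpos.ne
    · exact h
  have hczero : ∀ k, b k = 0 → c k = 0 := by
    have he : star v₀ ⬝ᵥ v = ∑ k, (if b k = 0 then (Complex.normSq (c k) : ℂ) else 0) := by
      rw [hv₀_def, ← hc, dot_unitary V hVmem, dotProduct]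
      refine Finset.sum_congr rfl fun k _ => ?_
      by_cases hk : b k = 0
      · simp only [hc₀_def, Pi.star_apply, if_pos hk]
        rw [mul_comm]
        simp [Complex.star_def, Complex.mul_conj]
      · simp [hc₀_def, hk]
    rw [horth] at he
    have hre := congrArg Complex.re he.symm
    rw [Complex.re_sum, Complex.zero_re] at hre
    have : ∀ k ∈ Finset.univ, (0:ℝ) ≤ (if b k = 0 then (Complex.normSq (c k) : ℂ) else 0).re := by
      intro k _
      by_cases hk : b k = 0 <;> simp [hk, Complex.normSq_nonneg]
    intro k hk
    have := (Finset.sum_eq_zero_iff_of_nonneg this).mp hre k (Finset.mem_univ k)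
    rw [if_pos hk] at this
    simpa using this
  have hnorm : ∑ k, Complex.normSq (c k) = 1 := by
    have h1 : star c ⬝ᵥ c = (1:ℂ) := by
      have := dot_unitary V hVmem c c
      rw [hc] at this
      rw [← this, hv_def, dot_self_eigenbasis]
    have h2 : star c ⬝ᵥ c = ((∑ k, Complex.normSq (c k) : ℝ) : ℂ) := by
      rw [dotProduct, Complex.ofReal_sum]
      refine Finset.sum_congr rfl fun k _ => ?_
      simp only [Pi.star_apply]
      rw [mul_comm]
      simp [Complex.star_def, Complex.mul_conj]
    rw [h2] at h1
    exact_mod_cast h1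
  have hquad : δ ≤ (star v ⬝ᵥ (ω *ᵥ v)).re := by
    have he : star v ⬝ᵥ (ω *ᵥ v) = ∑ k, (b k : ℂ) * (Complex.normSq (c k) : ℝ) := by
      conv_lhs => rw [hω.1.spectral_theorem, Unitary.conjStarAlgAut_apply]
      rw [dot_conj V hVmem, ← hc_def, dotProduct]
      refine Finset.sum_congr rfl fun k _ => ?_
      rw [Matrix.mulVec_diagonal]
      simp only [Pi.star_apply, Function.comp_apply, RCLike.ofReal_alg]
      rw [show ∀ z w : ℂ, star z * (w * z) = w * (z * star z) from fun z w => by ring]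
      simp [Complex.star_def, Complex.mul_conj, smul_eq_mul, Complex.real_smul]
      exact Or.inl rfl
    have hre : (star v ⬝ᵥ (ω *ᵥ v)).re = ∑ k, b k * Complex.normSq (c k) := by
      rw [he, re_sum_mul]
      simp
    rw [hre]
    calc δ = δ * ∑ k, Complex.normSq (c k) := by rw [hnorm, mul_one]
      _ = ∑ k, δ * Complex.normSq (c k) := Finset.mul_sum _ _ _
      _ ≤ ∑ k, b k * Complex.normSq (c k) := by
          refine Finset.sum_le_sum fun k _ => ?_
          rcases hδle k with h | h
          · rw [show b k = 0 from h, hczero k h]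
            simp
          · exact mul_le_mul_of_nonneg_right h (Complex.normSq_nonneg _)
  have hτq : 0 ≤ (star v ⬝ᵥ (τ *ᵥ v)).re := by simpa using hτ.re_dotProduct_nonneg v
  have hlam_eq : lam = (star v ⬝ᵥ (A *ᵥ v)).re := by
    have := hA.1.eigenvalues_eq j
    simpa using this
  have hexp : (star v ⬝ᵥ (A *ᵥ v)).re
      = (1-ε) * (star v ⬝ᵥ (ω *ᵥ v)).re + ε * (star v ⬝ᵥ (τ *ᵥ v)).re := by
    rw [hAdef, Matrix.add_mulVec, Matrix.smul_mulVec, Matrix.smul_mulVec,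
      dotProduct_add, dotProduct_smul, dotProduct_smul]
    simp [Complex.add_re, Complex.mul_re, Complex.real_smul, smul_eq_mul]
  have : (1-ε) * δ ≤ (1-ε) * (star v ⬝ᵥ (ω *ᵥ v)).re + ε * (star v ⬝ᵥ (τ *ᵥ v)).re := by
    have h1 : (1-ε) * δ ≤ (1-ε) * (star v ⬝ᵥ (ω *ᵥ v)).re :=
      mul_le_mul_of_nonneg_left hquad (by linarith)
    have h2 : 0 ≤ ε * (star v ⬝ᵥ (τ *ᵥ v)).re := mul_nonneg hε0 hτq
    linarith
  rw [hlam_eq, hexp]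
  exact this

lemma exists_delta {ω : Matrix n n ℂ} (hω : ω.PosSemidef) (htr : ω.trace = 1) :
    ∃ δ : ℝ, 0 < δ ∧ ∀ j, hω.1.eigenvalues j = 0 ∨ δ ≤ hω.1.eigenvalues j := by
  classical
  set S := (Finset.univ.filter (fun j => 0 < hω.1.eigenvalues j)).image hω.1.eigenvalues
    with hS_def
  have hS : S.Nonempty := by
    by_contra h
    have hall : ∀ j, hω.1.eigenvalues j = 0 := by
      intro j
      rcases (hω.eigenvalues_nonneg j).eq_or_lt with h0 | h0
      · exact h0.symm
      · exact absurd ⟨hω.1.eigenvalues j, Finset.mem_image_of_mem _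
          (Finset.mem_filter.mpr ⟨Finset.mem_univ j, h0⟩)⟩ h
    have h2 := sum_eigenvalues_eq_trace' hω.1
    rw [htr] at h2
    simp [hall] at h2
  refine ⟨S.min' hS, ?_, ?_⟩
  · obtain ⟨j, hj, hje⟩ := Finset.mem_image.mp (S.min'_mem hS)
    rw [← hje]
    exact (Finset.mem_filter.mp hj).2
  · intro j
    rcases (hω.eigenvalues_nonneg j).eq_or_lt with h0 | h0
    · exact Or.inl h0.symm
    · exact Or.inr (S.min'_le _ (Finset.mem_image_of_mem _
        (Finset.mem_filter.mpr ⟨Finset.mem_univ j, h0⟩)))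

noncomputable def gfun (c : ℝ) : ℝ → ℝ :=
  fun x => Real.log (max x c) + Real.log c * ((max (min x c) 0)/c - 1)

lemma gfun_continuous {c : ℝ} (hc : 0 < c) : Continuous (gfun c) := by
  apply Continuous.add
  · exact (continuous_id.max continuous_const).log
      (fun x => (lt_of_lt_of_le hc (le_max_right x c)).ne')
  · exact continuous_const.mul
      ((((continuous_id.min continuous_const).max continuous_const).div_const c).sub
        continuous_const)

lemma gfun_zero {c : ℝ} (hc : 0 < c) : gfun c 0 = 0 := by
  unfold gfun
  rw [max_eq_right hc.le, min_eq_left hc.le, max_self, zero_div]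
  ring

lemma gfun_ge {c x : ℝ} (hc : 0 < c) (hx : c ≤ x) : gfun c x = Real.log x := by
  unfold gfun
  rw [max_eq_left hx, min_eq_right hx, max_eq_left hc.le, div_self hc.ne']
  ring

lemma psd_smul {M : Matrix n n ℂ} (hM : M.PosSemidef) {r : ℝ} (hr : 0 ≤ r) :
    ((r : ℂ) • M).PosSemidef := by
  refine Matrix.PosSemidef.of_dotProduct_mulVec_nonneg ?_ ?_
  · simp [Matrix.IsHermitian, Matrix.conjTranspose_smul, hM.1.eq, Complex.star_def,
      Complex.conj_ofReal]
  · intro x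
    rw [Matrix.smul_mulVec, dotProduct_smul, smul_eq_mul]
    exact mul_nonneg (by exact_mod_cast hr) (hM.dotProduct_mulVec_nonneg x)

lemma cfc_poly {B : Matrix n n ℂ} (hB : B.IsHermitian) (P : Polynomial ℝ) :
    hB.cfc (fun x => P.eval x) = Polynomial.aeval B P := by
  rw [show hB.cfc (fun x => P.eval x) = hB.cfc P.eval from rfl, ← Matrix.IsHermitian.cfc_eq]
  exact cfc_polynomial P B (show IsSelfAdjoint B from hB)

lemma continuous_poly_trace (τ : Matrix n n ℂ) (P : Polynomial ℝ) :
    Continuous fun A : Matrix n n ℂ => ((τ * Polynomial.aeval A P).trace).re := by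
  have h1 : Continuous fun A : Matrix n n ℂ => Polynomial.aeval A P := by
    have : ∀ A : Matrix n n ℂ, Polynomial.aeval A P
        = ∑ i ∈ Finset.range (P.natDegree + 1), P.coeff i • A ^ i := fun A =>
      Polynomial.aeval_eq_sum_range (p := P) A
    simp only [this]
    exact continuous_finset_sum _ fun i _ => (continuous_const_smul (P.coeff i)).comp (continuous_pow i)
  have h2 : Continuous fun A : Matrix n n ℂ => (τ * Polynomial.aeval A P).trace :=
    (continuous_const.matrix_mul h1).matrix_trace
  exact Complex.continuous_re.comp h2

lemma Ere_cont {τ ω : Matrix n n ℂ} (hτ : τ.PosSemidef) (hτtr : τ.trace = 1)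
    (hω : ω.PosSemidef) (hωtr : ω.trace = 1)
    (hsupp : ∀ v, ω *ᵥ v = 0 → τ *ᵥ v = 0) {η : ℝ} (hη : 0 < η) :
    ∃ ε : ℝ, 0 < ε ∧ ε ≤ 1/2 ∧
      ∀ (hA : (((1-ε : ℝ) : ℂ) • ω + ((ε : ℝ) : ℂ) • τ).PosSemidef),
        |((τ * hA.1.cfc flog).trace).re - ((τ * hω.1.cfc flog).trace).re| < η := by
  obtain ⟨δ, hδpos, hδle⟩ := exists_delta hω hωtr
  set c0 := δ/2 with hc0
  have hc0pos : 0 < c0 := half_pos hδpos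
  obtain ⟨P, hP⟩ := exists_polynomial_near_of_continuousOn 0 1 (gfun c0)
    ((gfun_continuous hc0pos).continuousOn) (η/3) (by linarith)
  have hAc : Continuous fun e : ℝ => ((1-e : ℝ) : ℂ) • ω + ((e : ℝ) : ℂ) • τ := by
    apply Continuous.add
    · exact (Complex.continuous_ofReal.comp (continuous_const.sub continuous_id)).smul
        continuous_const
    · exact (Complex.continuous_ofReal.comp continuous_id).smul continuous_const
  have hFc : ContinuousAt (fun e : ℝ =>
      ((τ * Polynomial.aeval (((1-e : ℝ) : ℂ) • ω + ((e : ℝ) : ℂ) • τ) P).trace).re) 0 :=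
    ((continuous_poly_trace τ P).comp hAc).continuousAt
  rw [Metric.continuousAt_iff] at hFc
  obtain ⟨d, hdpos, hd⟩ := hFc (η/3) (by linarith)
  refine ⟨min (d/2) (1/2), by positivity, min_le_right _ _, ?_⟩
  set ε := min (d/2) (1/2) with hεdef
  intro hA
  have hεpos : 0 < ε := by positivity
  have hεhalf : ε ≤ 1/2 := min_le_right _ _
  have hεlt1 : ε < 1 := lt_of_le_of_lt hεhalf (by norm_num)
  set A := ((1-ε : ℝ) : ℂ) • ω + ((ε : ℝ) : ℂ) • τ with hAdef
  have hAtr : A.trace = 1 := by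
    rw [hAdef, Matrix.trace_add, Matrix.trace_smul, Matrix.trace_smul, hτtr, hωtr]
    simp only [smul_eq_mul, mul_one]
    push_cast
    ring
  have hdichA : ∀ j, hA.1.eigenvalues j = 0 ∨ c0 ≤ hA.1.eigenvalues j := by
    intro j
    rcases eigen_dichotomy hτ hω hsupp hεpos.le hεlt1 hδpos hδle hA j with h | h
    · exact Or.inl h
    · exact Or.inr (le_trans (by rw [hc0]; nlinarith) h)
  have hdichω : ∀ j, hω.1.eigenvalues j = 0 ∨ c0 ≤ hω.1.eigenvalues j := by
    intro j
    rcases hδle j with h | h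
    · exact Or.inl h
    · exact Or.inr (le_trans (by rw [hc0]; linarith) h)
  have hflogA : hA.1.cfc flog = hA.1.cfc (gfun c0) := cfc_congr_eigen _ (fun j => by
    rcases hdichA j with h | h
    · rw [h, flog_zero, gfun_zero hc0pos]
    · rw [flog_of_pos (lt_of_lt_of_le hc0pos h), gfun_ge hc0pos h])
  have hflogω : hω.1.cfc flog = hω.1.cfc (gfun c0) := cfc_congr_eigen _ (fun j => by
    rcases hdichω j with h | h
    · rw [h, flog_zero, gfun_zero hc0pos]
    · rw [flog_of_pos (lt_of_lt_of_le hc0pos h), gfun_ge hc0pos h])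
  have hbdA : ∀ j, |(fun x => gfun c0 x - P.eval x) (hA.1.eigenvalues j)| ≤ η/3 := by
    intro j
    have h01 : hA.1.eigenvalues j ∈ Set.Icc (0:ℝ) 1 :=
      ⟨hA.eigenvalues_nonneg j, state_eigen_le_one hA hAtr j⟩
    have := hP _ h01
    rw [abs_sub_comm] at this
    exact this.le
  have hbdω : ∀ j, |(fun x => gfun c0 x - P.eval x) (hω.1.eigenvalues j)| ≤ η/3 := by
    intro j
    have h01 : hω.1.eigenvalues j ∈ Set.Icc (0:ℝ) 1 :=
      ⟨hω.eigenvalues_nonneg j, state_eigen_le_one hω hωtr j⟩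
    have := hP _ h01
    rw [abs_sub_comm] at this
    exact this.le
  have hXA : hA.1.cfc (gfun c0) = hA.1.cfc (fun x => gfun c0 x - P.eval x)
      + Polynomial.aeval A P := by
    rw [cfc_sub' hA.1 (gfun c0) P.eval, cfc_poly hA.1 P]
    exact (sub_add_cancel _ _).symm
  have hXω : hω.1.cfc (gfun c0) = hω.1.cfc (fun x => gfun c0 x - P.eval x)
      + Polynomial.aeval ω P := by
    rw [cfc_sub' hω.1 (gfun c0) P.eval, cfc_poly hω.1 P]
    exact (sub_add_cancel _ _).symm
  have hsplitA : ((τ * hA.1.cfc (gfun c0)).trace).re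
      = ((τ * hA.1.cfc (fun x => gfun c0 x - P.eval x)).trace).re
        + ((τ * Polynomial.aeval A P).trace).re := by
    rw [hXA, Matrix.mul_add, Matrix.trace_add, Complex.add_re]
  have hsplitω : ((τ * hω.1.cfc (gfun c0)).trace).re
      = ((τ * hω.1.cfc (fun x => gfun c0 x - P.eval x)).trace).re
        + ((τ * Polynomial.aeval ω P).trace).re := by
    rw [hXω, Matrix.mul_add, Matrix.trace_add, Complex.add_re]
  have hEA : |((τ * hA.1.cfc (fun x => gfun c0 x - P.eval x)).trace).re| ≤ η/3 :=
    Ere_bound hτ hτtr hA.1 hbdA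
  have hEω : |((τ * hω.1.cfc (fun x => gfun c0 x - P.eval x)).trace).re| ≤ η/3 :=
    Ere_bound hτ hτtr hω.1 hbdω
  have hMid : |((τ * Polynomial.aeval A P).trace).re
      - ((τ * Polynomial.aeval ω P).trace).re| < η/3 := by
    have hdist : dist ε (0:ℝ) < d := by
      rw [Real.dist_eq, sub_zero, abs_of_pos hεpos]
      calc ε ≤ d/2 := min_le_left _ _
        _ < d := by linarith
    have := hd hdist
    rw [Real.dist_eq] at this
    have hA0 : ((1-(0:ℝ) : ℝ) : ℂ) • ω + (((0:ℝ) : ℝ) : ℂ) • τ = ω := by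
      norm_num
    rw [hA0] at this
    exact this
  rw [hflogA, hflogω, hsplitA, hsplitω]
  set x1 := ((τ * hA.1.cfc (fun x => gfun c0 x - P.eval x)).trace).re
  set x2 := ((τ * Polynomial.aeval A P).trace).re
  set y1 := ((τ * hω.1.cfc (fun x => gfun c0 x - P.eval x)).trace).re
  set y2 := ((τ * Polynomial.aeval ω P).trace).re
  calc |x1 + x2 - (y1 + y2)| ≤ |x1| + |x2 - y2| + |y1| := by
        have : x1 + x2 - (y1 + y2) = x1 + (x2 - y2) + (-y1) := by ring
        rw [this]
        calc |x1 + (x2 - y2) + -y1| ≤ |x1 + (x2 - y2)| + |-y1| := abs_add_le _ _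
          _ ≤ |x1| + |x2 - y2| + |-y1| := by linarith [abs_add_le x1 (x2 - y2)]
          _ = |x1| + |x2 - y2| + |y1| := by rw [abs_neg]
    _ < η := by linarith

end HelperDev

section HelperQIT
variable {n : Type*} [Fintype n] [DecidableEq n]

lemma nonneg_re_zero {z : ℂ} (hz : 0 ≤ z) (h : z.re = 0) : z = 0 := by
  rw [Complex.le_def] at hz
  exact Complex.ext h (by simpa using hz.2.symm)

lemma sum_mulVec' {m' : Type*} [Fintype m'] (A : m' → Matrix n n ℂ) (v : n → ℂ) :
    (∑ y, A y) *ᵥ v = ∑ y, (A y) *ᵥ v := by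
  funext i
  simp only [Matrix.mulVec, dotProduct, Finset.sum_apply, Matrix.sum_apply,
    Finset.sum_mul]
  rw [Finset.sum_comm]

lemma dot_sum' {m' : Type*} [Fintype m'] (v : n → ℂ) (w : m' → n → ℂ) :
    v ⬝ᵥ (∑ y, w y) = ∑ y, v ⬝ᵥ w y := by
  simp only [dotProduct, Finset.sum_apply, Finset.mul_sum]
  rw [Finset.sum_comm]

lemma psd_sum {m' : Type*} [Fintype m'] (A : m' → Matrix n n ℂ)
    (h : ∀ y, (A y).PosSemidef) : (∑ y, A y).PosSemidef := by
  refine Matrix.PosSemidef.of_dotProduct_mulVec_nonneg ?_ ?_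
  · show (∑ y, A y)ᴴ = _
    rw [Matrix.conjTranspose_sum]
    exact Finset.sum_congr rfl fun y _ => (h y).1.eq
  · intro v
    rw [sum_mulVec', dot_sum']
    exact Finset.sum_nonneg fun y _ => (h y).dotProduct_mulVec_nonneg v

lemma E_lin {m' : Type*} [Fintype m'] (w : m' → ℝ) (τs : m' → Matrix n n ℂ)
    (N : Matrix n n ℂ) :
    (((∑ y, ((w y : ℝ) : ℂ) • τs y) * N).trace).re = ∑ y, w y * ((τs y * N).trace).re := by
  rw [Finset.sum_mul, Matrix.trace_sum, Complex.re_sum]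
  refine Finset.sum_congr rfl fun y _ => ?_
  rw [Matrix.smul_mul, Matrix.trace_smul]
  simp [smul_eq_mul, Complex.mul_re]

lemma supp_le_sum {m' : Type*} [Fintype m'] (w : m' → ℝ) (hw : ∀ y, 0 ≤ w y)
    (τs : m' → Matrix n n ℂ) (hτs : ∀ y, (τs y).PosSemidef) {z : m'} (hz : 0 < w z) (v : n → ℂ)
    (hv : (∑ y, ((w y : ℝ) : ℂ) • τs y) *ᵥ v = 0) : τs z *ᵥ v = 0 := by
  have h0 : star v ⬝ᵥ ((∑ y, ((w y : ℝ) : ℂ) • τs y) *ᵥ v) = 0 := by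
    rw [hv, dotProduct_zero]
  rw [sum_mulVec'] at h0
  simp only [Matrix.smul_mulVec] at h0
  rw [dot_sum'] at h0
  simp only [dotProduct_smul] at h0
  have hre := congrArg Complex.re h0
  rw [Complex.re_sum, Complex.zero_re] at hre
  have hterm : ∀ y ∈ Finset.univ, (0:ℝ) ≤ (((w y : ℝ) : ℂ) • (star v ⬝ᵥ τs y *ᵥ v)).re := by
    intro y _
    have hq : 0 ≤ (star v ⬝ᵥ τs y *ᵥ v).re := by simpa using (hτs y).re_dotProduct_nonneg v
    rw [smul_eq_mul]
    simp only [Complex.mul_re, Complex.ofReal_re, Complex.ofReal_im, zero_mul, sub_zero]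
    exact mul_nonneg (hw y) hq
  have hz0 := (Finset.sum_eq_zero_iff_of_nonneg hterm).mp hre z (Finset.mem_univ z)
  rw [smul_eq_mul] at hz0
  simp only [Complex.mul_re, Complex.ofReal_re, Complex.ofReal_im, zero_mul, sub_zero] at hz0
  have hqre : (star v ⬝ᵥ τs z *ᵥ v).re = 0 := by
    rcases mul_eq_zero.mp hz0 with h | h
    · exact absurd h hz.ne'
    · exact h
  have hq0 : star v ⬝ᵥ τs z *ᵥ v = 0 := nonneg_re_zero ((hτs z).dotProduct_mulVec_nonneg v) hqre
  exact (Matrix.PosSemidef.dotProduct_mulVec_zero_iff (hτs z) v).mp hq0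

lemma supp_mix {τ ω : Matrix n n ℂ} (hτ : τ.PosSemidef) (hω : ω.PosSemidef) {ε : ℝ}
    (hε0 : 0 ≤ ε) (hε1 : ε < 1) (v : n → ℂ)
    (hv : (((1-ε : ℝ) : ℂ) • ω + ((ε : ℝ) : ℂ) • τ) *ᵥ v = 0) : ω *ᵥ v = 0 := by
  have h0 : star v ⬝ᵥ ((((1-ε : ℝ) : ℂ) • ω + ((ε : ℝ) : ℂ) • τ) *ᵥ v) = 0 := by
    rw [hv, dotProduct_zero]
  rw [Matrix.add_mulVec, Matrix.smul_mulVec, Matrix.smul_mulVec,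
    dotProduct_add, dotProduct_smul, dotProduct_smul] at h0
  have hre := congrArg Complex.re h0
  rw [Complex.add_re] at hre
  simp only [smul_eq_mul, Complex.mul_re, Complex.ofReal_re, Complex.ofReal_im,
    zero_mul, sub_zero, Complex.zero_re] at hre
  have hqω : 0 ≤ (star v ⬝ᵥ ω *ᵥ v).re := by simpa using hω.re_dotProduct_nonneg v
  have hqτ : 0 ≤ (star v ⬝ᵥ τ *ᵥ v).re := by simpa using hτ.re_dotProduct_nonneg v
  have hωre : (star v ⬝ᵥ ω *ᵥ v).re = 0 := by nlinarith
  exact (Matrix.PosSemidef.dotProduct_mulVec_zero_iff hω v).mp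
    (nonneg_re_zero (hω.dotProduct_mulVec_nonneg v) hωre)

end HelperQIT


section HelperMain
variable {n : Type*} [Fintype n] [DecidableEq n]

/-- auxiliary: `Tr(ρ log ρ).re`. -/
noncomputable def Gterm (ρ : Matrix n n ℂ) : ℝ := ((ρ * mlog ρ).trace).re

/-- auxiliary: `Tr(ρ log σ).re`. -/
noncomputable def Eterm (ρ σ : Matrix n n ℂ) : ℝ := ((ρ * mlog σ).trace).re

lemma mlog_eq_cfc {M : Matrix n n ℂ} (hM : M.IsHermitian) : mlog M = hM.cfc flog := by
  rw [show mlog M = cfc flog M from rfl, Matrix.IsHermitian.cfc_eq]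

lemma Gterm_eq_Eterm (ρ : Matrix n n ℂ) : Gterm ρ = Eterm ρ ρ := rfl

lemma value_eq {m' : Type*} [Fintype m'] (w : m' → ℝ) (τs : m' → Matrix n n ℂ) :
    vnEnt (∑ y, ((w y : ℝ) : ℂ) • τs y) - ∑ y, w y * vnEnt (τs y)
      = ∑ y, w y * (Gterm (τs y) - Eterm (τs y) (∑ y', ((w y' : ℝ) : ℂ) • τs y')) := by
  unfold vnEnt Gterm Eterm
  rw [E_lin w τs (mlog (∑ y', ((w y' : ℝ) : ℂ) • τs y'))]
  simp only [mul_sub, mul_neg, Finset.sum_neg_distrib]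
  rw [Finset.sum_sub_distrib]
  ring

lemma Eterm_sum {m' : Type*} [Fintype m'] (w : m' → ℝ) (τs : m' → Matrix n n ℂ)
    (σ : Matrix n n ℂ) :
    ∑ y, w y * Eterm (τs y) σ = Eterm (∑ y, ((w y : ℝ) : ℂ) • τs y) σ :=
  (E_lin w τs (mlog σ)).symm

lemma klein' {ρ σ : Matrix n n ℂ} (hρ : ρ.PosSemidef) (hσ : σ.PosSemidef)
    (htrρ : ρ.trace = 1) (htrσ : σ.trace = 1)
    (hsupp : ∀ v, σ *ᵥ v = 0 → ρ *ᵥ v = 0) : Eterm ρ σ ≤ Gterm ρ := by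
  unfold Eterm Gterm
  rw [mlog_eq_cfc hσ.1, mlog_eq_cfc hρ.1]
  exact klein_ineq hρ hσ (by rw [htrρ, htrσ]) hsupp

lemma Eterm_cont {τ ω : Matrix n n ℂ} (hτ : τ.PosSemidef) (hτtr : τ.trace = 1)
    (hω : ω.PosSemidef) (hωtr : ω.trace = 1)
    (hsupp : ∀ v, ω *ᵥ v = 0 → τ *ᵥ v = 0) {η : ℝ} (hη : 0 < η) :
    ∃ ε : ℝ, 0 < ε ∧ ε ≤ 1/2 ∧
      |Eterm τ (((1-ε : ℝ) : ℂ) • ω + ((ε : ℝ) : ℂ) • τ) - Eterm τ ω| < η := by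
  obtain ⟨ε, hε0, hεh, hcl⟩ := Ere_cont hτ hτtr hω hωtr hsupp hη
  have hApsd : (((1-ε : ℝ) : ℂ) • ω + ((ε : ℝ) : ℂ) • τ).PosSemidef :=
    (psd_smul hω (by linarith [hεh] : (0:ℝ) ≤ 1 - ε)).add (psd_smul hτ hε0.le)
  refine ⟨ε, hε0, hεh, ?_⟩
  have := hcl hApsd
  unfold Eterm
  rw [mlog_eq_cfc hApsd.1, mlog_eq_cfc hω.1]
  exact this

lemma qRelEnt_eq {ρ σ : Matrix n n ℂ} (h : SuppLE ρ σ) :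
    qRelEnt ρ σ = ((Gterm ρ - Eterm ρ σ : ℝ) : EReal) := by
  unfold qRelEnt
  rw [if_pos h]
  congr 1
  unfold Gterm Eterm
  rw [Matrix.mul_sub, Matrix.trace_sub, Complex.sub_re]

end HelperMain

section HelperChannel

lemma channel_psd {dA dB : ℕ} (𝒩 : Matrix (Fin dA) (Fin dA) ℂ →ₗ[ℂ] Matrix (Fin dB) (Fin dB) ℂ)
    (h𝒩 : IsQChannel 𝒩) {ρ : Matrix (Fin dA) (Fin dA) ℂ} (hρ : ρ.PosSemidef) :
    (𝒩 ρ).PosSemidef := by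
  classical
  let e : Fin dA × Fin 1 ≃ Fin dA := Equiv.prodUnique _ _
  let e' : Fin dB × Fin 1 ≃ Fin dB := Equiv.prodUnique _ _
  have hV : (ρ.submatrix e e).PosSemidef := hρ.submatrix e
  have h2 := h𝒩.completely_positive 1 (ρ.submatrix e e) hV
  have h3 : ampliate 1 𝒩 (ρ.submatrix e e) = (𝒩 ρ).submatrix e' e' := by
    ext pp qq
    show 𝒩 (Matrix.of fun a b => (ρ.submatrix e e) (a, pp.2) (b, qq.2)) pp.1 qq.1
      = (𝒩 ρ) (e' pp) (e' qq)
    have hinner : (Matrix.of fun a b => (ρ.submatrix e e) (a, pp.2) (b, qq.2)) = ρ := by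
      ext a b
      rfl
    rw [hinner]
    rfl
  rw [h3] at h2
  exact (Matrix.posSemidef_submatrix_equiv e').mp h2

end HelperChannel

/-- if a finite ensemble `{(p̄_x, ρ̄_x)}` achieves the Holevo quantity `χ(𝒩)`
(assumed finite), and `ω = Σ_x p̄_x 𝒩(ρ̄_x)`, then `D(𝒩(ρ̄_x)‖ω) = χ(𝒩)` for every `x` with
`p̄_x > 0`. -/
theorem relEnt_eq_holevo_of_pos {dA dB : ℕ}
    (𝒩 : Matrix (Fin dA) (Fin dA) ℂ →ₗ[ℂ] Matrix (Fin dB) (Fin dB) ℂ)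
    (h𝒩 : IsQChannel 𝒩)
    (hfin : BddAbove (holevoSet ⇑𝒩))
    {m : ℕ} (p : Fin m → ℝ) (ρb : Fin m → Matrix (Fin dA) (Fin dA) ℂ)
    (hp : ∀ x, 0 ≤ p x) (hp1 : ∑ x, p x = 1) (hρb : ∀ x, IsDensityMatrix (ρb x))
    (hach : vnEnt (∑ x, ((p x : ℝ) : ℂ) • 𝒩 (ρb x)) - ∑ x, p x * vnEnt (𝒩 (ρb x))
      = holevo ⇑𝒩) :
    ∀ x, 0 < p x →
      qRelEnt (𝒩 (ρb x)) (∑ y, ((p y : ℝ) : ℂ) • 𝒩 (ρb y)) = ((holevo ⇑𝒩 : ℝ) : EReal) := by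
  classical
  intro x hx
  have hτpsd : ∀ y, (𝒩 (ρb y)).PosSemidef := fun y => channel_psd 𝒩 h𝒩 (hρb y).2.1
  have hτtr : ∀ y, (𝒩 (ρb y)).trace = 1 := fun y => by
    rw [h𝒩.trace_preserving]; exact (hρb y).2.2
  set ω := ∑ y, ((p y : ℝ) : ℂ) • 𝒩 (ρb y) with hωdef
  set χ := holevo ⇑𝒩 with hχdef
  have hωpsd : ω.PosSemidef := psd_sum _ fun y => psd_smul (hτpsd y) (hp y)
  have hωtr : ω.trace = 1 := by
    rw [hωdef, Matrix.trace_sum]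
    simp only [Matrix.trace_smul, hτtr, smul_eq_mul, mul_one]
    rw [← Complex.ofReal_sum, hp1, Complex.ofReal_one]
  have hach' : ∑ y, p y * (Gterm (𝒩 (ρb y)) - Eterm (𝒩 (ρb y)) ω) = χ := by
    have hv := value_eq p (fun y => 𝒩 (ρb y))
    rw [← hωdef] at hv
    rw [← hv, hach]
  have key : ∀ z, 0 < p z → Gterm (𝒩 (ρb z)) - Eterm (𝒩 (ρb z)) ω ≤ χ := by
    intro z hz
    have hsuppz : ∀ v, ω *ᵥ v = 0 → 𝒩 (ρb z) *ᵥ v = 0 := fun v hv =>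
      supp_le_sum p hp _ hτpsd hz v (by rw [← hωdef]; exact hv)
    by_contra hgt
    push_neg at hgt
    set η := (Gterm (𝒩 (ρb z)) - Eterm (𝒩 (ρb z)) ω - χ)/2 with hηdef
    have hηpos : 0 < η := by rw [hηdef]; linarith
    obtain ⟨ε, hε0, hεhalf, hbound⟩ := Eterm_cont (hτpsd z) (hτtr z) hωpsd hωtr hsuppz hηpos
    have hε1 : ε < 1 := lt_of_le_of_lt hεhalf (by norm_num)
    set A := ((1-ε : ℝ) : ℂ) • ω + ((ε : ℝ) : ℂ) • 𝒩 (ρb z) with hAdef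
    have hApsd : A.PosSemidef :=
      (psd_smul hωpsd (by linarith)).add (psd_smul (hτpsd z) hε0.le)
    have hAtr : A.trace = 1 := by
      rw [hAdef, Matrix.trace_add, Matrix.trace_smul, Matrix.trace_smul, hτtr z, hωtr]
      simp only [smul_eq_mul, mul_one]
      push_cast
      ring
    set q : Fin m → ℝ := fun y => (1-ε) * p y + (if y = z then ε else 0) with hqdef
    have hq0 : ∀ y, 0 ≤ q y := by
      intro y
      rw [hqdef]
      have h1 : 0 ≤ (1-ε) * p y := mul_nonneg (by linarith) (hp y)
      have h2 : (0:ℝ) ≤ if y = z then ε else 0 := by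
        by_cases hy : y = z
        · rw [if_pos hy]; exact hε0.le
        · rw [if_neg hy]
      exact add_nonneg h1 h2
    have hq1 : ∑ y, q y = 1 := by
      rw [hqdef]
      rw [Finset.sum_add_distrib, ← Finset.mul_sum, hp1, Finset.sum_ite_eq' Finset.univ z]
      rw [if_pos (Finset.mem_univ z)]
      ring
    have hσq : ∑ y, ((q y : ℝ) : ℂ) • 𝒩 (ρb y) = A := by
      have hterm : ∀ y, ((q y : ℝ) : ℂ) • 𝒩 (ρb y)
          = ((1-ε : ℝ) : ℂ) • (((p y : ℝ) : ℂ) • 𝒩 (ρb y))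
            + (if y = z then ((ε : ℝ) : ℂ) • 𝒩 (ρb y) else 0) := by
        intro y
        rw [hqdef]
        dsimp only
        rw [Complex.ofReal_add, add_smul, Complex.ofReal_mul, mul_smul]
        congr 1
        by_cases hy : y = z
        · rw [if_pos hy, if_pos hy]
        · rw [if_neg hy, if_neg hy]
          simp
      rw [Finset.sum_congr rfl (fun y _ => hterm y), Finset.sum_add_distrib,
        ← Finset.smul_sum, Finset.sum_ite_eq' Finset.univ z, if_pos (Finset.mem_univ z),
        hAdef, hωdef]
    have hmem : vnEnt (∑ y, ((q y : ℝ) : ℂ) • 𝒩 (ρb y)) - ∑ y, q y * vnEnt (𝒩 (ρb y))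
        ∈ holevoSet ⇑𝒩 := ⟨m, q, ρb, hq0, hq1, hρb, rfl⟩
    have hle : vnEnt (∑ y, ((q y : ℝ) : ℂ) • 𝒩 (ρb y)) - ∑ y, q y * vnEnt (𝒩 (ρb y)) ≤ χ :=
      le_csSup hfin hmem
    rw [value_eq q (fun y => 𝒩 (ρb y)), hσq] at hle
    have hsplit : ∑ y, q y * (Gterm (𝒩 (ρb y)) - Eterm (𝒩 (ρb y)) A)
        = (1-ε) * (∑ y, p y * (Gterm (𝒩 (ρb y)) - Eterm (𝒩 (ρb y)) A))
          + ε * (Gterm (𝒩 (ρb z)) - Eterm (𝒩 (ρb z)) A) := by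
      rw [Finset.mul_sum]
      have hterm : ∀ y, q y * (Gterm (𝒩 (ρb y)) - Eterm (𝒩 (ρb y)) A)
          = (1-ε) * (p y * (Gterm (𝒩 (ρb y)) - Eterm (𝒩 (ρb y)) A))
            + (if y = z then ε * (Gterm (𝒩 (ρb y)) - Eterm (𝒩 (ρb y)) A) else 0) := by
        intro y
        rw [hqdef]
        dsimp only
        by_cases hy : y = z
        · rw [if_pos hy, if_pos hy]; ring
        · rw [if_neg hy, if_neg hy]; ring
      rw [Finset.sum_congr rfl (fun y _ => hterm y), Finset.sum_add_distrib,
        Finset.sum_ite_eq' Finset.univ z, if_pos (Finset.mem_univ z)]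
    have hEsumA : ∑ y, p y * Eterm (𝒩 (ρb y)) A = Eterm ω A := by
      rw [Eterm_sum p (fun y => 𝒩 (ρb y)) A, ← hωdef]
    have hEsumω : ∑ y, p y * Eterm (𝒩 (ρb y)) ω = Eterm ω ω := by
      rw [Eterm_sum p (fun y => 𝒩 (ρb y)) ω, ← hωdef]
    have hsuppA : ∀ v, A *ᵥ v = 0 → ω *ᵥ v = 0 := fun v hv =>
      supp_mix (hτpsd z) hωpsd hε0.le hε1 v (by rw [← hAdef]; exact hv)
    have hKlein : Eterm ω A ≤ Gterm ω := klein' hωpsd hApsd hωtr hAtr hsuppA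
    have hGω : Gterm ω = Eterm ω ω := Gterm_eq_Eterm ω
    have hPGA : ∑ y, p y * (Gterm (𝒩 (ρb y)) - Eterm (𝒩 (ρb y)) A)
        = ∑ y, p y * Gterm (𝒩 (ρb y)) - Eterm ω A := by
      simp only [mul_sub]
      rw [Finset.sum_sub_distrib, hEsumA]
    have hPGω : ∑ y, p y * (Gterm (𝒩 (ρb y)) - Eterm (𝒩 (ρb y)) ω)
        = ∑ y, p y * Gterm (𝒩 (ρb y)) - Eterm ω ω := by
      simp only [mul_sub]
      rw [Finset.sum_sub_distrib, hEsumω]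
    have hDA : Gterm (𝒩 (ρb z)) - Eterm (𝒩 (ρb z)) A ≤ χ := by
      rw [hsplit, hPGA] at hle
      rw [hPGω] at hach'
      nlinarith [hKlein, hGω, hle, hach', hε0, hε1]
    have habs := abs_lt.mp hbound
    have : Gterm (𝒩 (ρb z)) - Eterm (𝒩 (ρb z)) ω ≤ χ + η := by
      have h1 := habs.1
      linarith
    rw [hηdef] at this
    linarith
  have hsum0 : ∑ y, (p y * χ - p y * (Gterm (𝒩 (ρb y)) - Eterm (𝒩 (ρb y)) ω)) = 0 := by
    rw [Finset.sum_sub_distrib]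
    have h2 : ∑ y, p y * χ = χ := by rw [← Finset.sum_mul, hp1, one_mul]
    rw [h2, hach', sub_self]
  have hterms : ∀ y ∈ Finset.univ, (0:ℝ)
      ≤ p y * χ - p y * (Gterm (𝒩 (ρb y)) - Eterm (𝒩 (ρb y)) ω) := by
    intro y _
    rcases (hp y).eq_or_lt with h0 | h0
    · rw [← h0]; simp
    · have := key y h0
      nlinarith
  have hx0 := (Finset.sum_eq_zero_iff_of_nonneg hterms).mp hsum0 x (Finset.mem_univ x)
  have hDx : Gterm (𝒩 (ρb x)) - Eterm (𝒩 (ρb x)) ω = χ := by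
    have h1 : p x * (χ - (Gterm (𝒩 (ρb x)) - Eterm (𝒩 (ρb x)) ω)) = 0 := by linarith
    rcases mul_eq_zero.mp h1 with h | h
    · exact absurd h hx.ne'
    · linarith
  have hSx : SuppLE (𝒩 (ρb x)) ω := fun v hv =>
    supp_le_sum p hp _ hτpsd hx v (by rw [← hωdef]; exact hv)
  rw [qRelEnt_eq hSx, hDx]

end
end
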